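/- Let J be a finite index set, and for each j ∈ J let R_j be an (m_j)×n real matrix and W_j an (m_j)×(m_j) real matrix such that ∑_{j∈J} R_jᵀ·W_j·R_j = I (the weights form a partition of unity). Assume in addition that for every j ∈ J, R_j·C = R_j·C·R_jᵀ·R_j, where C is an n×n real matrix. Then for every i ∈ J and every vector u ∈ ℝⁿ, R_i·(Cᵀ·u) = R_i·( ∑_{j∈J} R_jᵀ·(R_j·C·R_jᵀ)ᵀ·W_j·(R_j·u) ); that is, the application of the transposed change of basis can be computed from the local restricted matrices C_j = R_j·C·R_jᵀ, the local weights W_j, and the restricted vectors u^j = R_j·u. -/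
import Mathlib


open Matrix

/-- with a partition-of-unity family of weights `W j` and locality of the
change of basis `C` w.r.t. every restriction `R j`, the restriction of the transposed
change of basis applied to `u` can be computed from local data. -/
theorem restriction_of_transposed_change_of_basis
    {n : Type*} [Fintype n] [DecidableEq n]
    {J : Type*} [Fintype J]
    {m : J → Type*} [∀ j, Fintype (m j)]
    (R : ∀ j, Matrix (m j) n ℝ) (W : ∀ j, Matrix (m j) (m j) ℝ)
    (C : Matrix n n ℝ)
    (hPU : ∑ j, (R j)ᵀ * W j * R j = (1 : Matrix n n ℝ))
    (hloc : ∀ j, R j * C = R j * C * (R j)ᵀ * R j)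
    (i : J) (u : n → ℝ) :
    (R i).mulVec (Cᵀ.mulVec u) =
      (R i).mulVec (∑ j, (R j)ᵀ.mulVec
        ((R j * C * (R j)ᵀ)ᵀ.mulVec ((W j).mulVec ((R j).mulVec u)))) := by
  have key : ∑ j, (R j)ᵀ * (R j * C * (R j)ᵀ)ᵀ * (W j) * (R j) = Cᵀ := by
    have h : ∀ j, (R j)ᵀ * (R j * C * (R j)ᵀ)ᵀ * (W j) * (R j)
        = Cᵀ * ((R j)ᵀ * W j * R j) := by
      intro j
      have e1 : (R j)ᵀ * (R j * C * (R j)ᵀ)ᵀ = (R j * C * (R j)ᵀ * R j)ᵀ :=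
        (transpose_mul _ _).symm
      rw [e1, ← hloc j, transpose_mul, Matrix.mul_assoc Cᵀ, Matrix.mul_assoc Cᵀ]
    simp only [h, ← Finset.mul_sum, hPU, mul_one]
  calc (R i).mulVec (Cᵀ.mulVec u)
      = (R i).mulVec ((∑ j, (R j)ᵀ * (R j * C * (R j)ᵀ)ᵀ * (W j) * (R j)).mulVec u) := by
        rw [key]
    _ = _ := by
        refine congrArg (R i).mulVec ?_
        have hs : ∀ (A : J → Matrix n n ℝ), (∑ j, A j) *ᵥ u = ∑ j, A j *ᵥ u := by
          intro A
          ext k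
          simp [Matrix.mulVec, dotProduct, Matrix.sum_apply, Finset.sum_mul]
          rw [Finset.sum_comm]
        rw [hs]
        refine Finset.sum_congr rfl fun j _ => ?_
        simp [Matrix.mulVec_mulVec, Matrix.mul_assoc]
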